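/- arXiv:1910.07726 — 7 statements merged into one kernel-verified Lean document; each statement's English description precedes it below -/
import Mathlib

section
/- Let λ₁ < λ₂ < 0 be reals, and define y(t) = α₁e^{λ₁t} + α₂e^{λ₂t} where α₁ = (λ₂x₀₁ − x₀₂)/(λ₂−λ₁), α₂ = (−λ₁x₀₁ + x₀₂)/(λ₂−λ₁). If α₁α₂ + α₂² > 0 (equivalently, (x₀₁x₀₂ − λ₁x₀₁²)/(λ₂−λ₁) > 0), then y(t) does not change sign for t ≥ 0: y(t) has the same (strict) sign as α₂ for all t ≥ 0. -/
theorem stmt_7 (lam1 lam2 : ℝ) (h12 : lam1 < lam2) (h2 : lam2 < 0)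
    (x01 x02 : ℝ) :
    let α1 : ℝ := (lam2 * x01 - x02) / (lam2 - lam1)
    let α2 : ℝ := (-lam1 * x01 + x02) / (lam2 - lam1)
    α1 * α2 + α2 ^ 2 > 0 →
      ∀ t : ℝ, 0 ≤ t →
        0 < α2 * (α1 * Real.exp (lam1 * t) + α2 * Real.exp (lam2 * t)) := by
  intro α1 α2 h t ht
  have hA : Real.exp (lam1 * t) ≤ Real.exp (lam2 * t) :=
    Real.exp_le_exp.mpr (by nlinarith)
  have hA0 : 0 < Real.exp (lam1 * t) := Real.exp_pos _
  have hB0 : 0 < Real.exp (lam2 * t) := Real.exp_pos _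
  have hα2 : α2 ≠ 0 := by
    intro h0
    rw [h0] at h; nlinarith
  have hd : 0 < α2 ^ 2 := by positivity
  rcases le_or_gt 0 (α1 * α2) with hc | hc
  · nlinarith
  · nlinarith [mul_le_mul_of_nonpos_left hA hc.le]
end

section
/- Let A be the n×n upper shift matrix, B = eₙ, and distinct reals λ₁,...,λₙ with Vandermonde matrix V and F = WV⁻¹ where W = [λ₁ⁿ ... λₙⁿ]. Then the characteristic polynomial of A + BF equals ∏_{i=1}^n (X − λᵢ); in particular if all λᵢ < 0 then A + BF is Hurwitz (all eigenvalues have negative real part). -/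
open Polynomial Matrix

lemma charpoly_similar' {N : ℕ} (M D V : Matrix (Fin N) (Fin N) ℝ)
    (hV : V.det ≠ 0) (h : M * V = V * D) : M.charpoly = D.charpoly := by
  have key : charmatrix M * (C : ℝ →+* ℝ[X]).mapMatrix V
      = (C : ℝ →+* ℝ[X]).mapMatrix V * charmatrix D := by
    simp only [charmatrix, sub_mul, mul_sub]
    congr 1
    · rw [scalar_commute _ (fun r => (Commute.all _ _)) _]
    · rw [← RingHom.map_mul, ← RingHom.map_mul, h]
  have hdet := congrArg Matrix.det key
  rw [Matrix.det_mul, Matrix.det_mul] at hdet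
  have hdV : ((C : ℝ →+* ℝ[X]).mapMatrix V).det = C V.det := by
    simp [RingHom.mapMatrix_apply, ← Polynomial.coe_mapRingHom, RingHom.map_det]
  rw [hdV] at hdet
  have hC : (C V.det : ℝ[X]) ≠ 0 := by simpa using hV
  have := mul_comm (C V.det) D.charpoly
  unfold Matrix.charpoly
  rw [mul_comm] at hdet
  exact mul_left_cancel₀ hC (by rw [hdet, mul_comm])

theorem stmt_11 (n : ℕ) (lam : Fin (n + 1) → ℝ) (hinj : Function.Injective lam) :
    let A : Matrix (Fin (n + 1)) (Fin (n + 1)) ℝ :=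
      Matrix.of fun i j => if (i : ℕ) + 1 = (j : ℕ) then 1 else 0
    let B : Matrix (Fin (n + 1)) (Fin 1) ℝ :=
      Matrix.of fun i _ => if i = Fin.last n then 1 else 0
    let V : Matrix (Fin (n + 1)) (Fin (n + 1)) ℝ :=
      Matrix.of fun i j => lam j ^ (i : ℕ)
    let W : Matrix (Fin 1) (Fin (n + 1)) ℝ :=
      Matrix.of fun _ j => lam j ^ (n + 1)
    let F : Matrix (Fin 1) (Fin (n + 1)) ℝ := W * V⁻¹
    (A + B * F).charpoly = ∏ i, (Polynomial.X - Polynomial.C (lam i)) ∧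
      ((∀ i, lam i < 0) → ∀ μ : ℂ,
        μ ∈ ((A + B * F).charpoly.map (algebraMap ℝ ℂ)).roots → μ.re < 0) := by
  intro A B V W F
  have hVt : V = (Matrix.vandermonde lam)ᵀ := by
    ext i j; simp [V, Matrix.vandermonde]
  have hVdet : V.det ≠ 0 := by
    rw [hVt, Matrix.det_transpose]
    rw [Matrix.det_vandermonde_ne_zero_iff]
    exact hinj
  have hVinv : V * V⁻¹ = 1 := Matrix.mul_nonsing_inv V (by simpa using hVdet)
  have hFV : F * V = W := by
    show W * V⁻¹ * V = W
    rw [Matrix.mul_assoc, Matrix.nonsing_inv_mul V (by simpa using hVdet),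
      Matrix.mul_one]
  -- key similarity relation
  have hsim : (A + B * F) * V = V * Matrix.diagonal lam := by
    rw [add_mul, Matrix.mul_assoc, hFV]
    ext i k
    rw [Matrix.add_apply, Matrix.mul_apply, Matrix.mul_apply, Matrix.mul_diagonal]
    by_cases hi : i = Fin.last n
    · subst hi
      have h1 : ∑ j, A (Fin.last n) j * V j k = 0 := by
        apply Finset.sum_eq_zero
        intro j _
        have : ((Fin.last n : Fin (n+1)) : ℕ) + 1 ≠ (j : ℕ) := by
          have := j.isLt
          simp only [Fin.val_last]
          omega
        simp only [A, Matrix.of_apply, this, if_false, zero_mul]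
      rw [h1, zero_add]
      have h2 : ∑ j : Fin 1, B (Fin.last n) j * W j k = lam k ^ (n + 1) := by
        simp [B, W]
      rw [h2]
      simp [V, pow_succ]
    · have hlt : (i : ℕ) < n := by
        have := Fin.val_lt_last hi
        simpa using this
      set j₀ : Fin (n + 1) := ⟨(i : ℕ) + 1, by omega⟩ with hj₀
      have h1 : ∑ j, A i j * V j k = lam k ^ ((i : ℕ) + 1) := by
        rw [Finset.sum_eq_single j₀]
        · simp [A, V, j₀]
        · intro j _ hj
          have : (i : ℕ) + 1 ≠ (j : ℕ) := by
            intro hc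
            apply hj
            apply Fin.ext
            simp [j₀, ← hc]
          simp [A, this]
        · simp
      have h2 : ∑ j : Fin 1, B i j * W j k = 0 := by
        simp [B, hi]
      rw [h1, h2, add_zero]
      simp [V, pow_succ]
  have hcp : (A + B * F).charpoly = ∏ i, (Polynomial.X - Polynomial.C (lam i)) := by
    rw [charpoly_similar' (A + B * F) (Matrix.diagonal lam) V hVdet hsim]
    rw [Matrix.charpoly_of_upperTriangular _ (Matrix.blockTriangular_diagonal lam)]
    simp
  refine ⟨hcp, ?_⟩
  intro hneg μ hμ
  rw [hcp] at hμ
  have hmap : (∏ i, (Polynomial.X - Polynomial.C (lam i))).map (algebraMap ℝ ℂ)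
      = ∏ i, (Polynomial.X - Polynomial.C ((lam i : ℝ) : ℂ)) := by
    rw [Polynomial.map_prod]
    simp
  rw [hmap] at hμ
  have hne : (∏ i, (Polynomial.X - Polynomial.C ((lam i : ℝ) : ℂ))) ≠ 0 := by
    apply Finset.prod_ne_zero_iff.mpr
    intro i _
    exact Polynomial.X_sub_C_ne_zero _
  have hroot := (Polynomial.mem_roots hne).1 hμ
  rw [Polynomial.IsRoot, Polynomial.eval_prod] at hroot
  obtain ⟨i, _, hi⟩ := Finset.prod_eq_zero_iff.1 hroot
  simp only [Polynomial.eval_sub, Polynomial.eval_X, Polynomial.eval_C, sub_eq_zero] at hi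
  rw [hi]
  simpa using hneg i
end

section
/- Let λ₁ < ... < λₙ < 0 and α₁, ..., αₙ ∈ ℝ with αₙ ≠ 0, and suppose |αₙ| > Σ_{k : αₖαₙ < 0} |αₖ|. Then y(t) = Σᵢ αᵢ e^{λᵢ t} tends to 0 as t → ∞ and never vanishes on [0, ∞); hence y converges to 0 monotonically in sign (without sign change). -/
open Finset Filter in
theorem stmt_12 (n : ℕ) (lam α : Fin (n + 1) → ℝ)
    (hmono : StrictMono lam) (hneg : lam (Fin.last n) < 0)
    (hαn : α (Fin.last n) ≠ 0)
    (hdom : (∑ k ∈ univ.filter (fun k : Fin (n + 1) =>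
        α k * α (Fin.last n) < 0), |α k|) < |α (Fin.last n)|) :
    Tendsto (fun t : ℝ => ∑ i, α i * Real.exp (lam i * t)) atTop (nhds 0) ∧
      ∀ t : ℝ, 0 ≤ t → (∑ i, α i * Real.exp (lam i * t)) ≠ 0 := by
  constructor
  · have h : Tendsto (fun t : ℝ => ∑ i, α i * Real.exp (lam i * t)) atTop
        (nhds (∑ _i : Fin (n + 1), (0 : ℝ))) := by
      refine tendsto_finset_sum _ (fun i _ => ?_)
      have hi : lam i < 0 := lt_of_le_of_lt (hmono.monotone (Fin.le_last i)) hneg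
      have he : Tendsto (fun t : ℝ => Real.exp (lam i * t)) atTop (nhds 0) :=
        Real.tendsto_exp_comp_nhds_zero.mpr
          ((tendsto_const_mul_atBot_of_neg hi).mpr tendsto_id)
      simpa using he.const_mul (α i)
    simpa using h
  · intro t ht
    set a := α (Fin.last n) with ha
    set s : ℝ := if 0 < a then 1 else -1 with hs
    have hapos : 0 < |a| := abs_pos.mpr hαn
    have hsa : s * a = |a| := by
      rcases lt_trichotomy a 0 with h | h | h
      · simp [hs, not_lt.mpr h.le, abs_of_neg h]
      · exact absurd h hαn
      · simp [hs, h, abs_of_pos h]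
    have hss : s * s = 1 := by
      rw [hs]; split_ifs <;> norm_num
    have habs : ∀ i, |s * α i| = |α i| := by
      intro i
      rw [abs_mul, hs]; split_ifs <;> simp
    -- rewrite the sum
    have hexp : ∀ i, α i * Real.exp (lam i * t) =
        Real.exp (lam (Fin.last n) * t) *
          (α i * Real.exp ((lam i - lam (Fin.last n)) * t)) := by
      intro i
      rw [mul_comm (Real.exp (lam (Fin.last n) * t)), mul_assoc, ← Real.exp_add]
      ring_nf
    have hsum : (∑ i, α i * Real.exp (lam i * t)) =
        Real.exp (lam (Fin.last n) * t) *
          (∑ i, α i * Real.exp ((lam i - lam (Fin.last n)) * t)) := by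
      rw [Finset.mul_sum]
      exact Finset.sum_congr rfl fun i _ => hexp i
    rw [hsum]
    refine mul_ne_zero (Real.exp_ne_zero _) ?_
    set g := ∑ i, α i * Real.exp ((lam i - lam (Fin.last n)) * t) with hg
    -- bound on each term
    have hbound : ∀ i ∈ univ.erase (Fin.last n),
        (if α i * a < 0 then -|α i| else 0) ≤
          s * (α i * Real.exp ((lam i - lam (Fin.last n)) * t)) := by
      intro i hi
      have hi' : i ≠ Fin.last n := (Finset.mem_erase.mp hi).1
      have hlt : lam i < lam (Fin.last n) :=
        hmono (lt_of_le_of_ne (Fin.le_last i) hi')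
      have he1 : Real.exp ((lam i - lam (Fin.last n)) * t) ≤ 1 := by
        rw [show (1 : ℝ) = Real.exp 0 by simp]
        exact Real.exp_le_exp.mpr (mul_nonpos_of_nonpos_of_nonneg (by linarith) ht)
      have he0 : 0 < Real.exp ((lam i - lam (Fin.last n)) * t) := Real.exp_pos _
      by_cases hc : α i * a < 0
      · rw [if_pos hc]
        have hsneg : s * α i < 0 := by
          have : (s * α i) * (s * a) < 0 := by nlinarith
          nlinarith
        have : s * α i = -|α i| := by
          rw [← habs i, abs_of_neg hsneg]; ring
        nlinarith [abs_nonneg (α i)]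
      · rw [if_neg hc]
        push_neg at hc
        have hsnn : 0 ≤ s * α i := by nlinarith
        rw [← mul_assoc]
        positivity
    have hsplit : s * g = s * (a * Real.exp ((lam (Fin.last n) - lam (Fin.last n)) * t)) +
        ∑ i ∈ univ.erase (Fin.last n),
          s * (α i * Real.exp ((lam i - lam (Fin.last n)) * t)) := by
      rw [hg, Finset.mul_sum, ← Finset.add_sum_erase _ _ (Finset.mem_univ (Fin.last n))]
    have hfirst : s * (a * Real.exp ((lam (Fin.last n) - lam (Fin.last n)) * t)) = |a| := by
      simp [← hsa]
    have hsum2 : ∑ i ∈ univ.erase (Fin.last n), (if α i * a < 0 then -|α i| else 0) =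
        -∑ k ∈ univ.filter (fun k : Fin (n + 1) => α k * a < 0), |α k| := by
      rw [← Finset.sum_filter, Finset.filter_erase,
        Finset.erase_eq_of_notMem, Finset.sum_neg_distrib]
      simp [← ha, not_lt.mpr (mul_self_nonneg a)]
    have hgpos : 0 < s * g := by
      have h1 : ∑ i ∈ univ.erase (Fin.last n), (if α i * a < 0 then -|α i| else 0) ≤
          ∑ i ∈ univ.erase (Fin.last n),
            s * (α i * Real.exp ((lam i - lam (Fin.last n)) * t)) :=
        Finset.sum_le_sum hbound
      rw [hsplit, hfirst]
      rw [hsum2] at h1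
      linarith
    intro h0
    rw [h0, mul_zero] at hgpos
    exact lt_irrefl 0 hgpos
end

section
/- Suppose (A, B, C) and exosystem matrices (S, H) are such that there exist Π and Γ solving the regulator (Sylvester) equations ΠS = AΠ + BΓ and 0 = CΠ + H, and F is such that A + BF is Hurwitz. Define G = Γ − FΠ, and consider the closed-loop dynamics ẋ = (A+BF)x + BGw, ẇ = Sw, with tracking error e(t) = Cx(t) + Hw(t). Then for x̃(t) := x(t) − Πw(t), one has x̃̇ = (A+BF)x̃ and e(t) = Cx̃(t); in particular e(t) → 0 as t → ∞ for every initial condition (x₀, w₀). -/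
open Filter NormedSpace Polynomial Matrix

lemma scalar_tendsto (μ : ℂ) (hμ : μ.re < 0) (j : ℕ) :
    Tendsto (fun t : ℝ => Complex.exp ((t:ℂ) * μ) * (t:ℂ) ^ j) atTop (nhds 0) := by
  rw [tendsto_zero_iff_norm_tendsto_zero]
  set a : ℝ := -μ.re with ha
  have ha0 : 0 < a := by simpa [ha] using hμ
  have h1 : Tendsto (fun s : ℝ => s ^ j * Real.exp (-s)) atTop (nhds 0) :=
    Real.tendsto_pow_mul_exp_neg_atTop_nhds_zero j
  have h2 : Tendsto (fun t : ℝ => a * t) atTop atTop :=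
    Tendsto.const_mul_atTop ha0 tendsto_id
  have key : Tendsto (fun t : ℝ => ((a*t) ^ j * Real.exp (-(a*t))) * (a ^ j)⁻¹)
      atTop (nhds 0) := by
    simpa using (h1.comp h2).mul_const ((a ^ j)⁻¹)
  refine key.congr' ?_
  filter_upwards [eventually_ge_atTop 0] with t ht
  have hn : ‖Complex.exp ((t:ℂ) * μ) * (t:ℂ) ^ j‖ = Real.exp (t * μ.re) * t ^ j := by
    rw [norm_mul, norm_pow, Complex.norm_exp,
      Complex.norm_real, Real.norm_eq_abs, abs_of_nonneg ht]
    congr 2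
    simp [Complex.mul_re]
  rw [hn, mul_pow]
  have : -(a * t) = t * μ.re := by rw [ha]; ring
  rw [this]
  field_simp


noncomputable def mulVecCLM {𝕜 : Type*} [NontriviallyNormedField 𝕜] {n : ℕ} (v : Fin n → 𝕜) :
    Matrix (Fin n) (Fin n) 𝕜 →L[𝕜] (Fin n → 𝕜) where
  toLinearMap :=
  { toFun := fun X => X.mulVec v
    map_add' := fun X Y => Matrix.add_mulVec X Y v
    map_smul' := fun c X => Matrix.smul_mulVec c X v }
  cont := Continuous.matrix_mulVec continuous_id continuous_const

@[simp] lemma mulVecCLM_apply {𝕜 : Type*} [NontriviallyNormedField 𝕜] {n : ℕ}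
    (v : Fin n → 𝕜) (X : Matrix (Fin n) (Fin n) 𝕜) : mulVecCLM v X = X.mulVec v := rfl

lemma exp_mulVec_eq {n : ℕ} (M : Matrix (Fin n) (Fin n) ℂ) (μ : ℂ) (v : Fin n → ℂ) (k : ℕ)
    (hk : ((M - μ • 1) ^ k).mulVec v = 0) (t : ℝ) :
    (exp ((t:ℂ) • M)).mulVec v =
      ∑ j ∈ Finset.range k,
        (Complex.exp ((t:ℂ) * μ) * ((t:ℂ) ^ j * ((j.factorial : ℂ))⁻¹)) •
          ((M - μ • 1) ^ j).mulVec v := by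
  letI : SeminormedRing (Matrix (Fin n) (Fin n) ℂ) := Matrix.linftyOpSemiNormedRing
  letI : NormedRing (Matrix (Fin n) (Fin n) ℂ) := Matrix.linftyOpNormedRing
  letI : NormedAlgebra ℂ (Matrix (Fin n) (Fin n) ℂ) := Matrix.linftyOpNormedAlgebra
  set N : Matrix (Fin n) (Fin n) ℂ := M - μ • 1 with hN
  have hsplit : (t:ℂ) • M = ((t:ℂ)*μ) • (1 : Matrix (Fin n) (Fin n) ℂ) + (t:ℂ) • N := by
    rw [hN, smul_sub, smul_smul]; abel
  have hcomm : Commute (((t:ℂ)*μ) • (1 : Matrix (Fin n) (Fin n) ℂ)) ((t:ℂ) • N) :=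
    ((Commute.one_left ((t:ℂ) • N)).smul_left _)
  rw [hsplit, Matrix.exp_add_of_commute _ _ hcomm]
  have h1 : exp (((t:ℂ)*μ) • (1 : Matrix (Fin n) (Fin n) ℂ))
      = Complex.exp ((t:ℂ)*μ) • (1 : Matrix (Fin n) (Fin n) ℂ) := by
    rw [← Algebra.algebraMap_eq_smul_one, ← Algebra.algebraMap_eq_smul_one, Complex.exp_eq_exp_ℂ]
    exact (algebraMap_exp_comm (𝕂 := ℂ) (𝔸 := Matrix (Fin n) (Fin n) ℂ) _).symm
  rw [h1, smul_mul_assoc, one_mul, Matrix.smul_mulVec]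
  have h2 : (exp ((t:ℂ) • N)).mulVec v
      = ∑' j : ℕ, ((j.factorial : ℂ))⁻¹ • (((t:ℂ) • N) ^ j).mulVec v := by
    rw [exp_eq_tsum (𝕂 := ℂ)]
    simpa using (mulVecCLM v).map_tsum (expSeries_summable' (𝕂 := ℂ) ((t:ℂ) • N))
  rw [h2]
  have hvanish : ∀ j ∉ Finset.range k,
      ((j.factorial : ℂ))⁻¹ • (((t:ℂ) • N) ^ j).mulVec v = 0 := by
    intro j hj
    rw [Finset.mem_range, not_lt] at hj
    have hpowsplit : N ^ j = N ^ (j - k) * N ^ k := by rw [← pow_add]; congr 1; omega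
    rw [_root_.smul_pow, Matrix.smul_mulVec, hpowsplit, ← Matrix.mulVec_mulVec, hk,
      Matrix.mulVec_zero, smul_zero, smul_zero]
  rw [tsum_eq_sum hvanish, Finset.smul_sum]
  refine Finset.sum_congr rfl fun j hj => ?_
  rw [_root_.smul_pow, Matrix.smul_mulVec, smul_smul, smul_smul]
  ring_nf


lemma decay {n : ℕ} (M : Matrix (Fin n) (Fin n) ℂ)
    (hM : ∀ μ : ℂ, μ ∈ M.charpoly.roots → μ.re < 0) (v : Fin n → ℂ) :
    Tendsto (fun t : ℝ => (exp ((t:ℂ) • M)).mulVec v) atTop (nhds 0) := by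
  set f : Module.End ℂ (Fin n → ℂ) := Matrix.toLin' M with hf
  have hv : v ∈ ⨆ μ : ℂ, f.maxGenEigenspace μ := by
    rw [Module.End.iSup_maxGenEigenspace_eq_top]; exact Submodule.mem_top
  refine Submodule.iSup_induction _ (motive := fun u =>
      Tendsto (fun t : ℝ => (exp ((t:ℂ) • M)).mulVec u) atTop (nhds 0)) hv ?_ ?_ ?_
  · -- generator case
    intro μ u hu
    by_cases hu0 : u = 0
    · simpa [hu0] using tendsto_const_nhds
    -- μ is a root of the charpoly
    have hμ : μ.re < 0 := by
      have hne : f.maxGenEigenspace μ ≠ ⊥ := by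
        intro h
        exact hu0 (by simpa [h] using hu)
      have heig : f.HasEigenvalue μ :=
        Module.End.HasUnifEigenvalue.lt zero_lt_one hne
      have h1 : (minpoly ℂ f).IsRoot μ := Module.End.hasEigenvalue_iff_isRoot.mp heig
      have h2 : minpoly ℂ f ∣ f.charpoly := f.minpoly_dvd_charpoly
      have h3 : f.charpoly = M.charpoly := by
        rw [← LinearMap.charpoly_toMatrix f (Pi.basisFun ℂ (Fin n)),
          LinearMap.toMatrix_eq_toMatrix', hf, LinearMap.toMatrix'_toLin']
      exact hM μ (by
        rw [mem_roots (M.charpoly_monic.ne_zero)]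
        exact h3 ▸ h1.dvd h2)
    -- nilpotency data
    obtain ⟨k, hk⟩ := (Module.End.mem_maxGenEigenspace f μ u).mp hu
    have hpow : ∀ (k : ℕ) (y : Fin n → ℂ),
        ((f - μ • 1) ^ k) y = ((M - μ • 1) ^ k).mulVec y := by
      intro k
      induction k with
      | zero => intro y; simp [Matrix.one_mulVec]
      | succ k ih =>
        intro y
        rw [pow_succ, Module.End.mul_apply, pow_succ, ← Matrix.mulVec_mulVec, ← ih]
        congr 1
        simp [hf, Matrix.sub_mulVec, Matrix.toLin'_apply, Matrix.smul_mulVec,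
          Matrix.one_mulVec, LinearMap.sub_apply, LinearMap.smul_apply,
          Module.End.one_apply]
    have hk' : ((M - μ • 1) ^ k).mulVec u = 0 := by rw [← hpow]; exact hk
    have := fun t : ℝ => exp_mulVec_eq M μ u k hk' t
    rw [tendsto_congr this]
    have : Tendsto (fun t : ℝ => ∑ j ∈ Finset.range k,
        (Complex.exp ((t:ℂ) * μ) * ((t:ℂ) ^ j * ((j.factorial : ℂ))⁻¹)) •
          ((M - μ • 1) ^ j).mulVec u) atTop
        (nhds (∑ j ∈ Finset.range k, (0 : Fin n → ℂ))) := by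
      refine tendsto_finset_sum _ fun j hj => ?_
      have hscal : Tendsto (fun t : ℝ =>
          Complex.exp ((t:ℂ) * μ) * ((t:ℂ) ^ j * ((j.factorial : ℂ))⁻¹)) atTop (nhds 0) := by
        have := (scalar_tendsto μ hμ j).mul_const ((j.factorial : ℂ))⁻¹
        rw [zero_mul] at this
        refine this.congr fun t => by ring
      have := hscal.smul_const (((M - μ • 1) ^ j).mulVec u)
      rwa [zero_smul] at this
    simpa using this
  · simpa using tendsto_const_nhds
  · intro y z hy hz
    have := hy.add hz
    rw [add_zero] at this
    refine this.congr fun t => ?_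
    rw [Matrix.mulVec_add]

lemma flow_hasDerivAt {n : ℕ} (M : Matrix (Fin n) (Fin n) ℝ) (v : Fin n → ℝ) (t : ℝ) :
    HasDerivAt (fun s : ℝ => (exp (s • M)).mulVec v)
      (M.mulVec ((exp (t • M)).mulVec v)) t := by
  letI : SeminormedRing (Matrix (Fin n) (Fin n) ℝ) := Matrix.linftyOpSemiNormedRing
  letI : NormedRing (Matrix (Fin n) (Fin n) ℝ) := Matrix.linftyOpNormedRing
  letI : NormedAlgebra ℝ (Matrix (Fin n) (Fin n) ℝ) := Matrix.linftyOpNormedAlgebra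
  have h := hasDerivAt_exp_smul_const' (𝕂 := ℝ) M t
  have h2 := ((mulVecCLM v).hasFDerivAt.comp_hasDerivAt t h)
  exact h2.congr_deriv (Matrix.mulVec_mulVec v M (exp (t • M))).symm

lemma solution_eq_flow {n : ℕ} (M : Matrix (Fin n) (Fin n) ℝ) (y : ℝ → Fin n → ℝ)
    (hy : ∀ t, HasDerivAt y (M.mulVec (y t)) t) {T : ℝ} (hT : 0 ≤ T) :
    y T = (exp (T • M)).mulVec (y 0) := by
  set L : (Fin n → ℝ) →L[ℝ] (Fin n → ℝ) :=
    LinearMap.toContinuousLinearMap (Matrix.mulVecLin M) with hL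
  have hLa : ∀ z, L z = M.mulVec z := fun z => by simp [hL]
  have hlip : ∀ t : ℝ, LipschitzWith ‖L‖₊ (fun z : Fin n → ℝ => M.mulVec z) := by
    intro t
    have := L.lipschitz
    refine LipschitzWith.of_dist_le_mul fun a b => ?_
    simpa [hLa] using this.dist_le_mul a b
  set g : ℝ → Fin n → ℝ := fun s => (exp (s • M)).mulVec (y 0) with hg
  have hgderiv : ∀ t : ℝ, HasDerivAt g (M.mulVec (g t)) t := fun t =>
    flow_hasDerivAt M (y 0) t
  have hcy : ContinuousOn y (Set.Icc 0 T) :=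
    (HasDerivAt.continuousOn fun t _ => hy t)
  have hcg : ContinuousOn g (Set.Icc 0 T) :=
    (HasDerivAt.continuousOn fun t _ => hgderiv t)
  have h0 : y 0 = g 0 := by
    simp [hg, zero_smul, exp_zero, Matrix.one_mulVec]
  have := ODE_solution_unique (v := fun _ z => M.mulVec z) hlip hcy
    (fun t _ => (hy t).hasDerivWithinAt) hcg (fun t _ => (hgderiv t).hasDerivWithinAt) h0
  exact this ⟨hT, le_refl T⟩


lemma exp_map_ofReal {n : ℕ} (M : Matrix (Fin n) (Fin n) ℝ) (t : ℝ) :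
    (exp (t • M)).map (algebraMap ℝ ℂ) = exp ((t:ℂ) • M.map (algebraMap ℝ ℂ)) := by
  letI : SeminormedRing (Matrix (Fin n) (Fin n) ℝ) := Matrix.linftyOpSemiNormedRing
  letI : NormedRing (Matrix (Fin n) (Fin n) ℝ) := Matrix.linftyOpNormedRing
  letI : NormedAlgebra ℝ (Matrix (Fin n) (Fin n) ℝ) := Matrix.linftyOpNormedAlgebra
  letI : SeminormedRing (Matrix (Fin n) (Fin n) ℂ) := Matrix.linftyOpSemiNormedRing
  letI : NormedRing (Matrix (Fin n) (Fin n) ℂ) := Matrix.linftyOpNormedRing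
  letI : NormedAlgebra ℝ (Matrix (Fin n) (Fin n) ℂ) := Matrix.linftyOpNormedAlgebra
  letI : NormedAlgebra ℚ (Matrix (Fin n) (Fin n) ℝ) := NormedAlgebra.restrictScalars ℚ ℝ _
  letI : NormedAlgebra ℚ (Matrix (Fin n) (Fin n) ℂ) := NormedAlgebra.restrictScalars ℚ ℝ _
  have hc : Continuous ((algebraMap ℝ ℂ).mapMatrix :
      Matrix (Fin n) (Fin n) ℝ →+* Matrix (Fin n) (Fin n) ℂ) := by
    have : ⇑((algebraMap ℝ ℂ).mapMatrix : Matrix (Fin n) (Fin n) ℝ →+* Matrix (Fin n) (Fin n) ℂ)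
        = fun X : Matrix (Fin n) (Fin n) ℝ => X.map (algebraMap ℝ ℂ) := by
      funext X; rfl
    rw [this]
    exact Continuous.matrix_map continuous_id (continuous_algebraMap ℝ ℂ)
  have h1 := map_exp ((algebraMap ℝ ℂ).mapMatrix :
      Matrix (Fin n) (Fin n) ℝ →+* Matrix (Fin n) (Fin n) ℂ) hc (t • M)
  have h2 : ((algebraMap ℝ ℂ).mapMatrix) (t • M) = t • M.map (algebraMap ℝ ℂ) := by
    ext i j
    simp [Complex.real_smul]
  have h3 : (t:ℂ) • M.map (algebraMap ℝ ℂ) = t • M.map (algebraMap ℝ ℂ) := by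
    ext i j
    simp [Complex.real_smul]
  rw [h3, ← h2]
  exact h1

lemma mulVec_map_ofReal {n : ℕ} (X : Matrix (Fin n) (Fin n) ℝ) (v : Fin n → ℝ) (j : Fin n) :
    (X.map (algebraMap ℝ ℂ)).mulVec (fun i => (v i : ℂ)) j = ((X.mulVec v j : ℝ) : ℂ) := by
  simp [Matrix.mulVec, dotProduct]


open Filter in
theorem stmt_14 (n p m : ℕ)
    (A : Matrix (Fin n) (Fin n) ℝ) (B : Matrix (Fin n) (Fin p) ℝ)
    (C : Matrix (Fin p) (Fin n) ℝ) (S : Matrix (Fin m) (Fin m) ℝ)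
    (H : Matrix (Fin p) (Fin m) ℝ)
    (Pi : Matrix (Fin n) (Fin m) ℝ) (Γ : Matrix (Fin p) (Fin m) ℝ)
    (F : Matrix (Fin p) (Fin n) ℝ)
    (hreg1 : Pi * S = A * Pi + B * Γ)
    (hreg2 : C * Pi + H = 0)
    (hHurwitz : ∀ μ : ℂ,
      μ ∈ ((A + B * F).charpoly.map (algebraMap ℝ ℂ)).roots → μ.re < 0)
    (G : Matrix (Fin p) (Fin m) ℝ) (hG : G = Γ - F * Pi)
    (x : ℝ → Fin n → ℝ) (w : ℝ → Fin m → ℝ)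
    (hx : ∀ t : ℝ, HasDerivAt x
      ((A + B * F).mulVec (x t) + (B * G).mulVec (w t)) t)
    (hw : ∀ t : ℝ, HasDerivAt w (S.mulVec (w t)) t) :
    (∀ t : ℝ, HasDerivAt (fun s => x s - Pi.mulVec (w s))
        ((A + B * F).mulVec (x t - Pi.mulVec (w t))) t) ∧
      (∀ t : ℝ, C.mulVec (x t) + H.mulVec (w t) =
        C.mulVec (x t - Pi.mulVec (w t))) ∧
      Tendsto (fun t : ℝ => C.mulVec (x t) + H.mulVec (w t)) atTop (nhds 0) := by
  set M : Matrix (Fin n) (Fin n) ℝ := A + B * F with hM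
  have hmat : M * Pi + B * G = Pi * S := by
    rw [hG, hM, Matrix.add_mul, Matrix.mul_sub, Matrix.mul_assoc, hreg1]
    abel
  -- Part 1
  have part1 : ∀ t : ℝ, HasDerivAt (fun s => x s - Pi.mulVec (w s))
      (M.mulVec (x t - Pi.mulVec (w t))) t := by
    intro t
    have hPw : HasDerivAt (fun s => Pi.mulVec (w s)) (Pi.mulVec (S.mulVec (w t))) t := by
      have h := (LinearMap.toContinuousLinearMap
        (Matrix.mulVecLin Pi)).hasFDerivAt.comp_hasDerivAt t (hw t)
      simpa [Function.comp_def] using h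
    have hsub := (hx t).sub hPw
    have hveq : M.mulVec (x t - Pi.mulVec (w t))
        = (M.mulVec (x t) + (B * G).mulVec (w t)) - Pi.mulVec (S.mulVec (w t)) := by
      have h1 : (Pi * S).mulVec (w t)
          = (M * Pi).mulVec (w t) + (B * G).mulVec (w t) := by
        rw [← hmat, Matrix.add_mulVec]
      have h2 : M.mulVec (x t - Pi.mulVec (w t))
          = M.mulVec (x t) - M.mulVec (Pi.mulVec (w t)) :=
        (Matrix.mulVecLin M).map_sub (x t) (Pi.mulVec (w t))
      rw [h2]
      simp only [Matrix.mulVec_mulVec]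
      rw [h1]
      abel
    rw [hveq]
    exact hsub
  have hCP : C * Pi = -H := eq_neg_of_add_eq_zero_left hreg2
  -- Part 2
  have part2 : ∀ t : ℝ, C.mulVec (x t) + H.mulVec (w t)
      = C.mulVec (x t - Pi.mulVec (w t)) := by
    intro t
    have h2 : C.mulVec (x t - Pi.mulVec (w t))
        = C.mulVec (x t) - C.mulVec (Pi.mulVec (w t)) :=
      (Matrix.mulVecLin C).map_sub (x t) (Pi.mulVec (w t))
    rw [h2, Matrix.mulVec_mulVec, hCP, Matrix.neg_mulVec]
    abel
  refine ⟨part1, part2, ?_⟩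
  -- Part 3
  set Mc : Matrix (Fin n) (Fin n) ℂ := M.map (algebraMap ℝ ℂ) with hMc
  have hroots : ∀ μ : ℂ, μ ∈ Mc.charpoly.roots → μ.re < 0 := by
    intro μ hμ
    rw [hMc, Matrix.charpoly_map] at hμ
    exact hHurwitz μ hμ
  set x₀ : Fin n → ℝ := x 0 - Pi.mulVec (w 0) with hx₀
  have hdecay := decay Mc hroots (fun i => (x₀ i : ℂ))
  have hxt : Tendsto (fun t : ℝ => x t - Pi.mulVec (w t)) atTop (nhds 0) := by
    rw [tendsto_pi_nhds]
    intro j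
    have hz : Tendsto (fun t : ℝ => (exp ((t:ℂ) • Mc)).mulVec (fun i => (x₀ i : ℂ)) j)
        atTop (nhds 0) := by
      have := (tendsto_pi_nhds.mp hdecay) j
      simpa using this
    have hre := (Complex.continuous_re.tendsto 0).comp hz
    rw [Complex.zero_re] at hre
    refine hre.congr' ?_
    filter_upwards [eventually_ge_atTop (0:ℝ)] with t ht
    have heq' := congrFun (solution_eq_flow M (fun s => x s - Pi.mulVec (w s)) part1 ht) j
    have hcplx : (exp ((t:ℂ) • Mc)).mulVec (fun i => (x₀ i : ℂ)) j
        = (((exp (t • M)).mulVec x₀ j : ℝ) : ℂ) := by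
      rw [hMc, ← exp_map_ofReal, mulVec_map_ofReal]
    simp only [Function.comp_apply, hcplx, Complex.ofReal_re]
    exact heq'.symm
  have hcont : Continuous (fun z : Fin n → ℝ => C.mulVec z) :=
    (LinearMap.toContinuousLinearMap (Matrix.mulVecLin C)).continuous
  have := (hcont.tendsto 0).comp hxt
  rw [show C.mulVec (0 : Fin n → ℝ) = 0 from Matrix.mulVec_zero C] at this
  refine this.congr fun t => (part2 t).symm
end

section
/- Under the regulator-equation setup (ΠS = AΠ + BΓ, CΠ + H = 0, G = Γ − FΠ), the tracking error of the closed-loop system from initial condition (x₀, w₀) does not change sign componentwise on [0,∞) if and only if the natural output response t ↦ C e^{(A+BF)t} x̃₀ of the nominal system from x̃₀ = x₀ − Πw₀ does not change sign componentwise on [0,∞). -/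
open NormedSpace

attribute [local instance] Matrix.linftyOpNormedAddCommGroup Matrix.linftyOpNormedRing
  Matrix.linftyOpNormedSpace Matrix.linftyOpNormedAlgebra

/-- The continuous-linear version of `mulVec` application, bundled twice. -/
noncomputable def mlCLM (n : ℕ) (M : Matrix (Fin n) (Fin n) ℝ) :
    (Fin n → ℝ) →L[ℝ] (Fin n → ℝ) :=
  LinearMap.toContinuousLinearMap M.mulVecLin

noncomputable def mlCLM₂ (n : ℕ) :
    Matrix (Fin n) (Fin n) ℝ →L[ℝ] ((Fin n → ℝ) →L[ℝ] (Fin n → ℝ)) :=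
  LinearMap.toContinuousLinearMap
    { toFun := mlCLM n
      map_add' := by
        intro M N; ext v; simp [mlCLM, Matrix.mulVecLin_add]
      map_smul' := by
        intro c M; ext v
        simp [mlCLM, Matrix.mulVecLin_apply, Matrix.smul_mulVec] }

@[simp] lemma mlCLM₂_apply (n : ℕ) (M : Matrix (Fin n) (Fin n) ℝ) (v : Fin n → ℝ) :
    mlCLM₂ n M v = M.mulVec v := by
  simp [mlCLM₂, mlCLM, Matrix.mulVecLin_apply]

lemma ode_sol (n : ℕ) (M : Matrix (Fin n) (Fin n) ℝ) (z : ℝ → Fin n → ℝ)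
    (hz : ∀ t : ℝ, HasDerivAt z (M.mulVec (z t)) t) (t : ℝ) :
    z t = (exp (t • M)).mulVec (z 0) := by
  -- consider g t = exp(-t M) ∙ z t and show it is constant
  set g : ℝ → Fin n → ℝ := fun t => (exp ((-t) • M)).mulVec (z t) with hgdef
  have hE : ∀ s : ℝ, HasDerivAt (fun t : ℝ => exp ((-t) • M))
      (-(exp ((-s) • M) * M)) s := by
    intro s
    have hfe : (fun t : ℝ => exp ((-t) • M)) = (fun t : ℝ => exp (t • (-M))) := by
      funext u; rw [neg_smul, smul_neg]
    have h1 : HasDerivAt (fun u : ℝ => exp (u • (-M)))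
        (exp (s • (-M)) * (-M)) s := hasDerivAt_exp_smul_const (-M) s
    rw [hfe]
    convert h1 using 1
    rw [smul_neg, ← neg_smul, mul_neg]
  have hg : ∀ s : ℝ, HasDerivAt g 0 s := by
    intro s
    have hc : HasDerivAt (fun t : ℝ => mlCLM₂ n (exp ((-t) • M)))
        (mlCLM₂ n (-(exp ((-s) • M) * M))) s :=
      ((mlCLM₂ n).hasFDerivAt.comp_hasDerivAt s (hE s))
    have := hc.clm_apply (hz s)
    have heq : mlCLM₂ n (-(exp ((-s) • M) * M)) (z s)
        + mlCLM₂ n (exp ((-s) • M)) (M.mulVec (z s)) = 0 := by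
      simp [Matrix.neg_mulVec, Matrix.mulVec_mulVec]
    rw [heq] at this
    simpa [hgdef] using this
  have hconst : ∀ s : ℝ, g s = g 0 := by
    intro s
    exact is_const_of_deriv_eq_zero (fun u => (hg u).differentiableAt)
      (fun u => (hg u).deriv) s 0
  have h0 : g 0 = z 0 := by simp [hgdef]
  have ht : (exp ((-t) • M)).mulVec (z t) = z 0 := by
    have := hconst t; rw [h0] at this; exact this
  have hcomm : Commute (t • M) (-(t • M)) := (Commute.refl _).neg_right
  have hinv : exp (t • M) * exp ((-t) • M) = 1 := by
    have := (Matrix.exp_add_of_commute _ _ hcomm).symm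
    simpa [neg_smul] using this
  calc z t = (1 : Matrix (Fin n) (Fin n) ℝ).mulVec (z t) := by simp
    _ = (exp (t • M) * exp ((-t) • M)).mulVec (z t) := by rw [hinv]
    _ = (exp (t • M)).mulVec ((exp ((-t) • M)).mulVec (z t)) := by
        rw [Matrix.mulVec_mulVec]
    _ = (exp (t • M)).mulVec (z 0) := by rw [ht]

theorem stmt_15 (n p m : ℕ)
    (A : Matrix (Fin n) (Fin n) ℝ) (B : Matrix (Fin n) (Fin p) ℝ)
    (C : Matrix (Fin p) (Fin n) ℝ) (S : Matrix (Fin m) (Fin m) ℝ)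
    (H : Matrix (Fin p) (Fin m) ℝ)
    (Pi : Matrix (Fin n) (Fin m) ℝ) (Γ : Matrix (Fin p) (Fin m) ℝ)
    (F : Matrix (Fin p) (Fin n) ℝ)
    (hreg1 : Pi * S = A * Pi + B * Γ)
    (hreg2 : C * Pi + H = 0)
    (G : Matrix (Fin p) (Fin m) ℝ) (hG : G = Γ - F * Pi)
    (x₀ : Fin n → ℝ) (w₀ : Fin m → ℝ)
    (x : ℝ → Fin n → ℝ) (w : ℝ → Fin m → ℝ)
    (hx0 : x 0 = x₀) (hw0 : w 0 = w₀)
    (hx : ∀ t : ℝ, HasDerivAt x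
      ((A + B * F).mulVec (x t) + (B * G).mulVec (w t)) t)
    (hw : ∀ t : ℝ, HasDerivAt w (S.mulVec (w t)) t) :
    (∀ i : Fin p,
        (∀ t : ℝ, 0 ≤ t → 0 ≤ (C.mulVec (x t) + H.mulVec (w t)) i) ∨
        (∀ t : ℝ, 0 ≤ t → (C.mulVec (x t) + H.mulVec (w t)) i ≤ 0)) ↔
      (∀ i : Fin p,
        (∀ t : ℝ, 0 ≤ t →
          0 ≤ C.mulVec ((NormedSpace.exp (t • (A + B * F))).mulVec
            (x₀ - Pi.mulVec w₀)) i) ∨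
        (∀ t : ℝ, 0 ≤ t →
          C.mulVec ((NormedSpace.exp (t • (A + B * F))).mulVec
            (x₀ - Pi.mulVec w₀)) i ≤ 0)) := by
  set M := A + B * F with hM
  set z : ℝ → Fin n → ℝ := fun t => x t - Pi.mulVec (w t) with hzdef
  have hz : ∀ t : ℝ, HasDerivAt z (M.mulVec (z t)) t := by
    intro t
    have hPw : HasDerivAt (fun t => Pi.mulVec (w t))
        (Pi.mulVec (S.mulVec (w t))) t := by
      have := (LinearMap.toContinuousLinearMap
        Pi.mulVecLin).hasFDerivAt.comp_hasDerivAt t (hw t)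
      simpa [Matrix.mulVecLin_apply, Function.comp_def] using this
    have := (hx t).sub hPw
    refine this.congr_deriv (Eq.symm ?_)
    have hmat : M * Pi = Pi * S - B * G := by
      rw [hG, hM, hreg1]
      simp only [Matrix.add_mul, Matrix.mul_sub, Matrix.mul_assoc]
      abel
    calc M.mulVec (z t)
        = M.mulVec (x t) - (M * Pi).mulVec (w t) := by
          rw [hzdef]; simp [Matrix.mulVec_sub, Matrix.mulVec_mulVec]
      _ = M.mulVec (x t) - ((Pi * S).mulVec (w t) - (B * G).mulVec (w t)) := by
          rw [hmat, Matrix.sub_mulVec]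
      _ = M.mulVec (x t) + (B * G).mulVec (w t) - Pi.mulVec (S.mulVec (w t)) := by
          rw [Matrix.mulVec_mulVec]; abel
  have hzsol : ∀ t : ℝ, z t = (exp (t • M)).mulVec (x₀ - Pi.mulVec w₀) := by
    intro t
    have := ode_sol n M z hz t
    rw [this, hzdef]
    simp [hx0, hw0]
  have herr : ∀ t : ℝ,
      C.mulVec (x t) + H.mulVec (w t)
        = C.mulVec ((exp (t • M)).mulVec (x₀ - Pi.mulVec w₀)) := by
    intro t
    have h2 : C.mulVec (x t) + H.mulVec (w t) = C.mulVec (z t) := by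
      have : (C * Pi + H).mulVec (w t) = 0 := by rw [hreg2]; simp
      rw [hzdef]
      simp only [Matrix.mulVec_sub]
      have h3 : C.mulVec (Pi.mulVec (w t)) + H.mulVec (w t) = 0 := by
        rw [Matrix.mulVec_mulVec, ← Matrix.add_mulVec, hreg2]; simp
      have := h3
      abel_nf
      abel_nf at h3
      linear_combination (norm := module) h3
    rw [h2, hzsol t]
  constructor
  · intro h i
    rcases h i with h' | h'
    · left; intro t ht; have := h' t ht; rwa [herr t] at this
    · right; intro t ht; have := h' t ht; rwa [herr t] at this
  · intro h i
    rcases h i with h' | h'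
    · left; intro t ht; rw [herr t]; exact h' t ht
    · right; intro t ht; rw [herr t]; exact h' t ht
end

section
/- Let λ < 0 and consider y(t) = α₁ e^{λ₁ t} + ... + αₙ e^{λₙ t} with λ₁ < ... < λₙ < 0. If y(t₀) = 0 for some t₀ ≥ 0 and y is not identically zero, then the dominance condition |αₙ| > Σ_{k: αₖαₙ<0} |αₖ| together with αₙ ≠ 0 fails; i.e., the condition of Lemma NOS is violated (contrapositive form of the nonovershooting lemma). -/
open Finset in
theorem stmt_16 (n : ℕ) (lam α : Fin (n + 1) → ℝ)
    (hmono : StrictMono lam) (hneg : lam (Fin.last n) < 0)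
    (t₀ : ℝ) (ht₀ : 0 ≤ t₀)
    (hzero : ∑ i, α i * Real.exp (lam i * t₀) = 0)
    (hnontriv : ¬ ∀ t : ℝ, ∑ i, α i * Real.exp (lam i * t) = 0) :
    ¬ (α (Fin.last n) ≠ 0 ∧
      (∑ k ∈ univ.filter (fun k : Fin (n + 1) =>
        k ≠ Fin.last n ∧ α k * α (Fin.last n) < 0), |α k|) < |α (Fin.last n)|) := by
  rintro ⟨hne, hdom⟩
  set N := Fin.last n with hN
  set s : ℝ := if 0 < α N then 1 else -1 with hs
  have hsα : s * α N = |α N| := by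
    rcases lt_trichotomy (α N) 0 with h | h | h
    · rw [hs, if_neg (not_lt.mpr h.le), abs_of_neg h]; ring
    · exact absurd h hne
    · rw [hs, if_pos h, abs_of_pos h]; ring
  set g : Fin (n + 1) → ℝ := fun i =>
    (if i = N then |α N| else 0) + (if i ≠ N ∧ α i * α N < 0 then -|α i| else 0) with hg
  have hexp : ∀ i : Fin (n + 1), Real.exp (lam i * t₀) ≤ Real.exp (lam N * t₀) := fun i =>
    Real.exp_le_exp.mpr (mul_le_mul_of_nonneg_right (hmono.monotone (Fin.le_last i)) ht₀)
  have key : ∀ i ∈ univ, g i * Real.exp (lam N * t₀) ≤ s * (α i * Real.exp (lam i * t₀)) := by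
    intro i _
    by_cases hi : i = N
    · rw [hg]
      simp only
      rw [if_pos hi, if_neg (by simp [hi]), add_zero, hi,
        show s * (α N * Real.exp (lam N * t₀)) = s * α N * Real.exp (lam N * t₀) by ring, hsα]
    · rw [hg]
      simp only
      rw [if_neg hi]
      by_cases hopp : α i * α N < 0
      · rw [if_pos (show i ≠ N ∧ α i * α N < 0 from ⟨hi, hopp⟩), zero_add]
        have h1 : s * α i = -|α i| := by
          rcases lt_trichotomy (α N) 0 with h | h | h
          · have hai : 0 < α i := by nlinarith
            rw [hs, if_neg (not_lt.mpr h.le), abs_of_pos hai]; ring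
          · exact absurd h hne
          · have hai : α i < 0 := by nlinarith
            rw [hs, if_pos h, abs_of_neg hai]; ring
        rw [show s * (α i * Real.exp (lam i * t₀)) = s * α i * Real.exp (lam i * t₀) by ring, h1]
        exact mul_le_mul_of_nonpos_left (hexp i) (neg_nonpos.mpr (abs_nonneg _))
      · rw [if_neg (fun h : i ≠ N ∧ α i * α N < 0 => hopp h.2), add_zero, zero_mul,
          show s * (α i * Real.exp (lam i * t₀)) = s * α i * Real.exp (lam i * t₀) by ring]
        have h1 : 0 ≤ s * α i := by
          rcases lt_trichotomy (α N) 0 with h | h | h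
          · have hai : α i ≤ 0 := by nlinarith [not_lt.mp hopp]
            rw [hs, if_neg (not_lt.mpr h.le)]; linarith
          · exact absurd h hne
          · have hai : 0 ≤ α i := by nlinarith [not_lt.mp hopp]
            rw [hs, if_pos h]; linarith
        exact mul_nonneg h1 (Real.exp_pos _).le
  have hsum := Finset.sum_le_sum key
  rw [← Finset.mul_sum, hzero, mul_zero, ← Finset.sum_mul] at hsum
  have hgsum : ∑ i, g i = |α N| - ∑ k ∈ univ.filter (fun k : Fin (n + 1) =>
      k ≠ N ∧ α k * α N < 0), |α k| := by
    rw [hg, Finset.sum_add_distrib, Finset.sum_ite_eq' univ N (fun _ => |α N|),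
      if_pos (mem_univ N)]
    have : ∑ i, (if i ≠ N ∧ α i * α N < 0 then -|α i| else 0) =
        ∑ k ∈ univ.filter (fun k : Fin (n + 1) => k ≠ N ∧ α k * α N < 0), -|α k| := by
      rw [Finset.sum_filter]
    rw [this, Finset.sum_neg_distrib]
    ring
  rw [hgsum] at hsum
  have hpos : 0 < (|α N| - ∑ k ∈ univ.filter (fun k : Fin (n + 1) =>
      k ≠ N ∧ α k * α N < 0), |α k|) * Real.exp (lam N * t₀) :=
    mul_pos (by linarith) (Real.exp_pos _)
  linarith
end

section
/- For the chain-of-integrators system with Moore feedback F = WV⁻¹ built from distinct negative reals λ₁ < ... < λₙ < 0, the output y(t) = C e^{(A+BF)t} x₀ = Σᵢ αᵢ e^{λᵢ t} (α = V⁻¹x₀) satisfies: if αₙ > 0 and all αₖ ≥ 0, then y(t) > 0 for all t ≥ 0 and y is eventually decreasing; in particular y converges to 0 from above without overshoot. -/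
open Filter in
theorem stmt_17 (n : ℕ) (lam : Fin (n + 1) → ℝ)
    (hmono : StrictMono lam) (hneg : lam (Fin.last n) < 0)
    (x₀ : Fin (n + 1) → ℝ) :
    let A : Matrix (Fin (n + 1)) (Fin (n + 1)) ℝ :=
      Matrix.of fun i j => if (i : ℕ) + 1 = (j : ℕ) then 1 else 0
    let B : Matrix (Fin (n + 1)) (Fin 1) ℝ :=
      Matrix.of fun i _ => if i = Fin.last n then 1 else 0
    let C : Fin (n + 1) → ℝ := fun j => if j = 0 then 1 else 0
    let V : Matrix (Fin (n + 1)) (Fin (n + 1)) ℝ :=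
      Matrix.of fun i j => lam j ^ (i : ℕ)
    let W : Matrix (Fin 1) (Fin (n + 1)) ℝ :=
      Matrix.of fun _ j => lam j ^ (n + 1)
    let F : Matrix (Fin 1) (Fin (n + 1)) ℝ := W * V⁻¹
    let α : Fin (n + 1) → ℝ := V⁻¹.mulVec x₀
    let y : ℝ → ℝ := fun t =>
      ∑ j, C j * (NormedSpace.exp (t • (A + B * F))).mulVec x₀ j
    0 < α (Fin.last n) → (∀ k, 0 ≤ α k) →
      (∀ t : ℝ, 0 ≤ t → 0 < y t) ∧
      (∃ T : ℝ, 0 ≤ T ∧ StrictAntiOn y (Set.Ici T)) ∧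
      Tendsto y atTop (nhds 0) := by
  intro A B C V W F α y hpos hnonneg
  have hlamneg : ∀ j, lam j < 0 := fun j =>
    lt_of_le_of_lt (hmono.monotone (Fin.le_last j)) hneg
  -- V is invertible (Vandermonde)
  have hdet : V.det ≠ 0 := by
    have hVt : V = (Matrix.vandermonde lam).transpose := by
      ext i j; simp [V, Matrix.vandermonde]
    rw [hVt, Matrix.det_transpose, Matrix.det_vandermonde_ne_zero_iff]
    exact hmono.injective
  have hdetU : IsUnit V.det := isUnit_iff_ne_zero.mpr hdet
  have hVU : IsUnit V := (Matrix.isUnit_iff_isUnit_det V).mpr hdetU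
  have hVinv : V⁻¹ * V = 1 := Matrix.nonsing_inv_mul V hdetU
  have hVinv' : V * V⁻¹ = 1 := Matrix.mul_nonsing_inv V hdetU
  -- key: (A + B*F) * V = V * diagonal lam
  have hFV : F * V = W := by
    show W * V⁻¹ * V = W
    rw [Matrix.mul_assoc, hVinv, Matrix.mul_one]
  have key : (A + B * F) * V = V * Matrix.diagonal lam := by
    rw [Matrix.add_mul, Matrix.mul_assoc, hFV]
    ext i j
    rcases eq_or_ne i (Fin.last n) with hi | hi
    · subst hi
      have h1 : ∀ k : Fin (n + 1), ¬ (n + 1 = (k : ℕ)) := by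
        intro k hk
        have := k.isLt
        omega
      simp [Matrix.mul_apply, A, B, W, V, h1, pow_succ, Matrix.diagonal_apply,
        mul_ite, mul_zero, mul_one]
    · have hlt : (i : ℕ) + 1 < n + 1 := by
        have : (i : ℕ) < n := Fin.val_lt_last hi
        omega
      have hcond : ∀ k : Fin (n + 1), ((i : ℕ) + 1 = (k : ℕ)) ↔ k = (⟨(i : ℕ) + 1, hlt⟩ : Fin (n + 1)) := by
        intro k
        constructor
        · intro h; exact Fin.ext h.symm
        · intro h; subst h; rfl
      simp [Matrix.mul_apply, A, B, W, V, hcond, hi, pow_succ, Matrix.diagonal_apply,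
        mul_ite, mul_zero, mul_one, ite_mul, zero_mul, one_mul]
  have hM : A + B * F = V * Matrix.diagonal lam * V⁻¹ := by
    calc A + B * F = (A + B * F) * (V * V⁻¹) := by rw [hVinv', Matrix.mul_one]
    _ = (A + B * F) * V * V⁻¹ := by rw [Matrix.mul_assoc]
    _ = V * Matrix.diagonal lam * V⁻¹ := by rw [key]
  -- closed form for y
  have hy : ∀ t : ℝ, y t = ∑ j, α j * Real.exp (lam j * t) := by
    intro t
    have hsmul : t • (A + B * F) = V * Matrix.diagonal (fun j => t * lam j) * V⁻¹ := by
      have hd : t • Matrix.diagonal lam = Matrix.diagonal (fun j => t * lam j) := by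
        ext i j
        rcases eq_or_ne i j with h | h
        · subst h; simp [Matrix.diagonal_apply_eq]
        · simp [Matrix.diagonal_apply_ne _ h]
      rw [hM, ← smul_mul_assoc, ← mul_smul_comm, hd]
    have hexp : NormedSpace.exp (t • (A + B * F))
        = V * Matrix.diagonal (fun j => Real.exp (t * lam j)) * V⁻¹ := by
      have hd2 : NormedSpace.exp (fun j : Fin (n + 1) => t * lam j)
          = fun j => Real.exp (t * lam j) := by
        funext j
        rw [Pi.exp_def]
        exact (congrFun Real.exp_eq_exp_ℝ _).symm
      rw [hsmul, Matrix.exp_conj V _ hVU, Matrix.exp_diagonal, hd2]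
    show (∑ j, C j * (NormedSpace.exp (t • (A + B * F))).mulVec x₀ j) = _
    rw [hexp]
    have h0 : (∑ j, C j * ((V * Matrix.diagonal (fun j => Real.exp (t * lam j)) * V⁻¹).mulVec x₀) j)
        = ((V * Matrix.diagonal (fun j => Real.exp (t * lam j)) * V⁻¹).mulVec x₀) 0 := by
      rw [Finset.sum_eq_single 0]
      · simp [C]
      · intro b _ hb; simp [C, hb]
      · intro h; exact absurd (Finset.mem_univ 0) h
    rw [h0, Matrix.mul_assoc, ← Matrix.mulVec_mulVec, ← Matrix.mulVec_mulVec]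
    have hα : V⁻¹.mulVec x₀ = α := rfl
    rw [hα, show (Matrix.diagonal fun j => Real.exp (t * lam j)).mulVec α
        = fun k => Real.exp (t * lam k) * α k from
      funext fun k => Matrix.mulVec_diagonal _ _ _]
    simp only [Matrix.mulVec, dotProduct, V, Matrix.of_apply, pow_zero, one_mul]
    exact Finset.sum_congr rfl fun j _ => by rw [mul_comm (lam j) t]; simp [Fin.val_zero]; ring
  refine ⟨?_, ⟨0, le_refl 0, ?_⟩, ?_⟩
  · intro t ht
    rw [hy]
    apply Finset.sum_pos' (fun j _ => mul_nonneg (hnonneg j) (Real.exp_pos _).le)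
    exact ⟨Fin.last n, Finset.mem_univ _, mul_pos hpos (Real.exp_pos _)⟩
  · intro s _ t _ hst
    rw [hy, hy]
    apply Finset.sum_lt_sum
    · intro j _
      exact mul_le_mul_of_nonneg_left
        (Real.exp_le_exp.mpr (by nlinarith [hlamneg j])) (hnonneg j)
    · exact ⟨Fin.last n, Finset.mem_univ _,
        (mul_lt_mul_iff_right₀ hpos).mpr (Real.exp_lt_exp.mpr (by nlinarith [hlamneg (Fin.last n)]))⟩
  · have h : Tendsto (fun t => ∑ j, α j * Real.exp (lam j * t)) atTop (nhds 0) := by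
      have h0 : (0 : ℝ) = ∑ _j : Fin (n + 1), (0 : ℝ) := by simp
      rw [h0]
      apply tendsto_finset_sum
      intro j _
      have hexp : Tendsto (fun t => Real.exp (lam j * t)) atTop (nhds 0) := by
        have h1 : Tendsto (fun t : ℝ => (-lam j) * t) atTop atTop :=
          Tendsto.const_mul_atTop (neg_pos.2 (hlamneg j)) tendsto_id
        have h2 := Real.tendsto_exp_neg_atTop_nhds_zero.comp h1
        refine h2.congr fun t => ?_
        simp [Function.comp]
      simpa using tendsto_const_nhds.mul hexp
    exact h.congr fun t => (hy t).symm
end
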